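/- arXiv:2108.12291 — 2 statements merged into one kernel-verified Lean document; each statement's English description precedes it below -/
import Mathlib

section
/- Let H be a real Hilbert space. The sine dissimilarity satisfies the triangle inequality on nonzero elements: for all nonzero u, v, w ∈ H, δ̃₁(u, w) ≤ δ̃₁(u, v) + δ̃₁(v, w). Consequently δ̃₁ is a pseudometric on H \ {0}. -/
/-- Sine dissimilarity between (nonzero) elements of a real inner ℝ product space:
`δ̃₁(u,v) = sqrt(1 - ⟨u,v⟩² / (‖u‖²‖v‖²))`. -/
noncomputable def sineDissim {H : Type*} [NormedAddCommGroup H] [InnerProductSpace ℝ H]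
    (u v : H) : ℝ :=
  Real.sqrt (1 - (inner ℝ u v : ℝ) ^ 2 / (‖u‖ ^ 2 * ‖v‖ ^ 2))

/-- Relative projection error of `u` onto the subspace `K`:
`η(u, K) = ‖u - π_K(u)‖ / ‖u‖`. -/
noncomputable def relProjError {H : Type*} [NormedAddCommGroup H] [InnerProductSpace ℝ H]
    (u : H) (K : Submodule ℝ H) [K.HasOrthogonalProjection] : ℝ :=
  ‖u - (K.orthogonalProjectionOnto u : H)‖ / ‖u‖

private theorem real_sine_tri (a b c al be : ℝ) (ha : a^2 ≤ 1) (hb : b^2 ≤ 1)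
    (hal : 0 ≤ al) (hbe : 0 ≤ be) (hal2 : al^2 = 1 - a^2) (hbe2 : be^2 = 1 - b^2)
    (h : (c - a*b)^2 ≤ al^2 * be^2) :
    1 - c^2 ≤ (al + be)^2 := by
  have hd : |c - a*b| ≤ al * be := by
    rw [← Real.sqrt_sq_eq_abs]
    calc Real.sqrt ((c - a*b)^2) ≤ Real.sqrt (al^2 * be^2) := Real.sqrt_le_sqrt h
    _ = al * be := by rw [← mul_pow, Real.sqrt_sq (mul_nonneg hal hbe)]
  have hab : |a*b| ≤ 1 := by
    nlinarith [sq_abs (a*b), abs_nonneg (a*b), sq_nonneg a, sq_nonneg b]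
  have h2 : a * b * (c - a*b) ≥ -(al*be) := by
    have := abs_mul (a*b) (c - a*b)
    nlinarith [neg_abs_le (a*b*(c-a*b)), abs_nonneg (c - a*b),
      mul_le_mul hab hd (abs_nonneg _) zero_le_one]
  nlinarith [sq_nonneg (c - a*b), mul_nonneg hal hbe, sq_nonneg (al*be)]

private theorem unit_tri {H : Type*} [NormedAddCommGroup H] [InnerProductSpace ℝ H]
    (u v w : H) (hu : ‖u‖ = 1) (hv : ‖v‖ = 1) (hw : ‖w‖ = 1) :
    Real.sqrt (1 - (inner ℝ u w : ℝ)^2) ≤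
      Real.sqrt (1 - (inner ℝ u v : ℝ)^2) + Real.sqrt (1 - (inner ℝ v w : ℝ)^2) := by
  set a : ℝ := inner ℝ u v with ha'
  set b : ℝ := inner ℝ v w with hb'
  set c : ℝ := inner ℝ u w with hc'
  have habs : ∀ (x y : H), ‖x‖ = 1 → ‖y‖ = 1 → (inner ℝ x y : ℝ)^2 ≤ 1 := by
    intro x y hx hy
    have := abs_real_inner_le_norm x y
    rw [hx, hy] at this
    nlinarith [sq_abs (inner ℝ x y : ℝ), abs_nonneg (inner ℝ x y : ℝ)]
  have ha : a^2 ≤ 1 := habs u v hu hv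
  have hb : b^2 ≤ 1 := habs v w hv hw
  have hc : c^2 ≤ 1 := habs u w hu hw
  have hvv : (inner ℝ v v : ℝ) = 1 := by
    rw [real_inner_self_eq_norm_sq, hv]; norm_num
  have hxy : (inner ℝ (u - a • v) (w - b • v) : ℝ) = c - a * b := by
    simp only [inner_sub_left, inner_sub_right, real_inner_smul_left,
      real_inner_smul_right, hvv, ← ha', ← hb', ← hc']
    ring
  have hx : ‖u - a • v‖^2 = 1 - a^2 := by
    have h0 := norm_sub_sq_real u (a • v)
    rw [real_inner_smul_right, ← ha', norm_smul, hu, hv, Real.norm_eq_abs, mul_one] at h0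
    rw [h0, sq_abs]; ring
  have hy : ‖w - b • v‖^2 = 1 - b^2 := by
    have h0 := norm_sub_sq_real w (b • v)
    have hwv : (inner ℝ w v : ℝ) = b := by rw [hb']; exact real_inner_comm v w
    rw [real_inner_smul_right, hwv, norm_smul, hw, hv,
      Real.norm_eq_abs, mul_one] at h0
    rw [h0, sq_abs]; ring
  have hCS : (c - a*b)^2 ≤ (1 - a^2) * (1 - b^2) := by
    have h1 := abs_real_inner_le_norm (u - a • v) (w - b • v)
    rw [hxy] at h1
    calc (c - a*b)^2 = |c - a*b|^2 := (sq_abs _).symm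
    _ ≤ (‖u - a • v‖ * ‖w - b • v‖)^2 := by
        apply pow_le_pow_left₀ (abs_nonneg _) h1
    _ = (1 - a^2) * (1 - b^2) := by rw [mul_pow, hx, hy]
  have h1a : (0:ℝ) ≤ 1 - a^2 := by linarith
  have h1b : (0:ℝ) ≤ 1 - b^2 := by linarith
  have key : 1 - c^2 ≤ (Real.sqrt (1 - a^2) + Real.sqrt (1 - b^2))^2 := by
    apply real_sine_tri a b c _ _ ha hb (Real.sqrt_nonneg _) (Real.sqrt_nonneg _)
      (Real.sq_sqrt h1a) (Real.sq_sqrt h1b)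
    rw [Real.sq_sqrt h1a, Real.sq_sqrt h1b]; exact hCS
  calc Real.sqrt (1 - c^2) ≤ Real.sqrt ((Real.sqrt (1-a^2) + Real.sqrt (1-b^2))^2) :=
      Real.sqrt_le_sqrt key
  _ = Real.sqrt (1-a^2) + Real.sqrt (1-b^2) :=
      Real.sqrt_sq (by positivity)

private theorem sineDissim_eq_unit {H : Type*} [NormedAddCommGroup H]
    [InnerProductSpace ℝ H] (u v : H) (hu : u ≠ 0) (hv : v ≠ 0) :
    sineDissim u v = Real.sqrt (1 - (inner ℝ (‖u‖⁻¹ • u) (‖v‖⁻¹ • v) : ℝ)^2) := by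
  have hu' : ‖u‖ ≠ 0 := norm_ne_zero_iff.mpr hu
  have hv' : ‖v‖ ≠ 0 := norm_ne_zero_iff.mpr hv
  unfold sineDissim
  congr 1
  rw [real_inner_smul_left, real_inner_smul_right]
  field_simp

/-- The sine dissimilarity satisfies the triangle inequality on nonzero
elements; consequently (being also zero on the diagonal and symmetric) it is a
pseudometric on `H \ {0}`. -/
theorem sineDissim_triangle_and_pseudometric
    {H : Type*} [NormedAddCommGroup H] [InnerProductSpace ℝ H] [CompleteSpace H] :
    (∀ u v w : H, u ≠ 0 → v ≠ 0 → w ≠ 0 →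
      sineDissim u w ≤ sineDissim u v + sineDissim v w) ∧
    (∀ u : {x : H // x ≠ 0}, sineDissim u.1 u.1 = 0) ∧
    (∀ u v : {x : H // x ≠ 0}, sineDissim u.1 v.1 = sineDissim v.1 u.1) ∧
    (∀ u v w : {x : H // x ≠ 0},
      sineDissim u.1 w.1 ≤ sineDissim u.1 v.1 + sineDissim v.1 w.1) := by
  have tri : ∀ u v w : H, u ≠ 0 → v ≠ 0 → w ≠ 0 →
      sineDissim u w ≤ sineDissim u v + sineDissim v w := by
    intro u v w hu hv hw
    rw [sineDissim_eq_unit u w hu hw, sineDissim_eq_unit u v hu hv,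
      sineDissim_eq_unit v w hv hw]
    exact unit_tri _ _ _ (norm_smul_inv_norm hu) (norm_smul_inv_norm hv)
      (norm_smul_inv_norm hw)
  refine ⟨tri, ?_, ?_, fun u v w => tri u.1 v.1 w.1 u.2 v.2 w.2⟩
  · intro u
    have hu : ‖u.1‖ ≠ 0 := norm_ne_zero_iff.mpr u.2
    unfold sineDissim
    rw [real_inner_self_eq_norm_sq]
    rw [show (‖u.1‖^2)^2 / (‖u.1‖^2 * ‖u.1‖^2) = 1 by field_simp]
    simp
  · intro u v
    unfold sineDissim
    rw [real_inner_comm u.1 v.1, mul_comm]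
end

section
/- Let H be a real Hilbert space, let M̂ = {u_1, …, u_m} be a finite set of nonzero elements of H, and let K ≥ 2. For every partition {P_k}_{1≤k≤K} of M̂ and for every choice of representatives ũ_k ∈ M̂, the K-1-ROM-dictionary cost equals the k-medoids cost with the sine dissimilarity: Σ_{k=1}^{K} Σ_{i=1}^{m} 1_{P_k}(u_i) · η(u_i, span{ũ_k})² = Σ_{k=1}^{K} Σ_{i=1}^{m} 1_{P_k}(u_i) · δ̃₁(u_i, ũ_k)². Consequently, a partition of M̂ minimizes min_{ũ_1,…,ũ_K ∈ M̂} Σ_k Σ_i 1_{P_k}(u_i) η(u_i, span{ũ_k})² if and only if it minimizes the k-medoids clustering cost min_{ũ_1,…,ũ_K ∈ M̂} Σ_k Σ_i 1_{P_k}(u_i) δ̃₁(u_i, ũ_k)². -/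
/-- `P` is a partition (into `K` nonempty, pairwise disjoint, covering subsets) of `M`. -/
def IsPartitionOf {H : Type*} {K : ℕ} (P : Fin K → Set H) (M : Set H) : Prop :=
  (∀ k, (P k).Nonempty) ∧ (∀ k, P k ⊆ M) ∧
    (∀ k l, k ≠ l → Disjoint (P k) (P l)) ∧ (⋃ k, P k) = M

/-- The `K`-`1`-ROM-dictionary cost of a partition `P` of the snapshot set `{u i}`:
`min_{ũ₁,…,ũ_K ∈ M̂} Σ_k Σ_i 1_{P_k}(u_i) · η(u_i, span{ũ_k})²`. -/
noncomputable def dictROMCost {H : Type*} [NormedAddCommGroup H] [InnerProductSpace ℝ H]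
    {m K : ℕ} (u : Fin m → H) (P : Fin K → Set H) : ℝ :=
  ⨅ t : Fin K → Fin m, ∑ k : Fin K, ∑ i : Fin m,
    (P k).indicator
      (fun _ => relProjError (u i) (Submodule.span ℝ {u (t k)}) ^ 2) (u i)

/-- The k-medoids clustering cost of a partition `P` of the snapshot set `{u i}` for the
sine dissimilarity: `min_{ũ₁,…,ũ_K ∈ M̂} Σ_k Σ_i 1_{P_k}(u_i) · δ̃₁(u_i, ũ_k)²`. -/
noncomputable def kMedoidsCost {H : Type*} [NormedAddCommGroup H] [InnerProductSpace ℝ H]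
    {m K : ℕ} (u : Fin m → H) (P : Fin K → Set H) : ℝ :=
  ⨅ t : Fin K → Fin m, ∑ k : Fin K, ∑ i : Fin m,
    (P k).indicator (fun _ => sineDissim (u i) (u (t k)) ^ 2) (u i)

lemma key_eq {H : Type*} [NormedAddCommGroup H] [InnerProductSpace ℝ H] [CompleteSpace H]
    (u v : H) (hu : u ≠ 0) (hv : v ≠ 0) :
    relProjError u (Submodule.span ℝ {v}) ^ 2 = sineDissim u v ^ 2 := by
  have hv2 : ‖v‖ ≠ 0 := norm_ne_zero_iff.mpr hv
  have hu2 : ‖u‖ ≠ 0 := norm_ne_zero_iff.mpr hu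
  have habs : |(inner ℝ u v : ℝ)| ≤ ‖u‖ * ‖v‖ := abs_real_inner_le_norm u v
  have hCS : (inner ℝ u v : ℝ)^2 ≤ ‖u‖^2 * ‖v‖^2 := by
    nlinarith [abs_nonneg (inner ℝ u v : ℝ), sq_abs (inner ℝ u v : ℝ)]
  have hpos : (0:ℝ) < ‖u‖^2*‖v‖^2 := by positivity
  have hnn : 0 ≤ 1 - (inner ℝ u v : ℝ)^2 / (‖u‖^2*‖v‖^2) := by
    rw [sub_nonneg, div_le_one hpos]; exact hCS
  rw [sineDissim, Real.sq_sqrt hnn, relProjError, div_pow, ← Submodule.starProjection_apply,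
    Submodule.starProjection_singleton]
  have h1 : ‖u - ((inner ℝ v u : ℝ) / ‖v‖ ^ 2) • v‖ ^ 2
      = ‖u‖^2 - (inner ℝ u v : ℝ)^2/‖v‖^2 := by
    rw [norm_sub_sq_real, inner_smul_right, norm_smul, mul_pow, Real.norm_eq_abs, sq_abs,
      real_inner_comm v u]
    field_simp
    ring
  simp only [RCLike.ofReal_real_eq_id, id_eq]
  rw [h1]
  field_simp

lemma cost_eq {H : Type*} [NormedAddCommGroup H] [InnerProductSpace ℝ H] [CompleteSpace H]
    {m K : ℕ} (u : Fin m → H) (hu : ∀ i, u i ≠ 0) (P : Fin K → Set H) :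
    dictROMCost u P = kMedoidsCost u P := by
  unfold dictROMCost kMedoidsCost
  refine iInf_congr fun t => ?_
  refine Finset.sum_congr rfl fun k _ => Finset.sum_congr rfl fun i _ => ?_
  by_cases h : u i ∈ P k <;>
    simp [Set.indicator, h, key_eq (u i) (u (t k)) (hu i) (hu (t k))]

/-- For a finite set `M̂ = {u₁, …, u_m}` of nonzero elements of a real Hilbert
space and `K ≥ 2`: for every partition `{P_k}` of `M̂` and every choice of representatives
`ũ_k = u (t k) ∈ M̂`, the `K`-`1`-ROM-dictionary cost equals the k-medoids cost with the
sine dissimilarity; consequently, a partition minimizes the former cost (minimized over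
representatives) iff it minimizes the k-medoids clustering cost. -/
theorem dictROMCost_eq_kMedoidsCost_and_minimizers_iff
    {H : Type*} [NormedAddCommGroup H] [InnerProductSpace ℝ H] [CompleteSpace H]
    {m K : ℕ} (hK : 2 ≤ K) (u : Fin m → H) (hu : ∀ i, u i ≠ 0)
    (P : Fin K → Set H) (hP : IsPartitionOf P (Set.range u)) :
    (∀ t : Fin K → Fin m,
      ∑ k : Fin K, ∑ i : Fin m,
        (P k).indicator
          (fun _ => relProjError (u i) (Submodule.span ℝ {u (t k)}) ^ 2) (u i)
      = ∑ k : Fin K, ∑ i : Fin m,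
        (P k).indicator (fun _ => sineDissim (u i) (u (t k)) ^ 2) (u i)) ∧
    ((∀ P' : Fin K → Set H, IsPartitionOf P' (Set.range u) →
        dictROMCost u P ≤ dictROMCost u P') ↔
      (∀ P' : Fin K → Set H, IsPartitionOf P' (Set.range u) →
        kMedoidsCost u P ≤ kMedoidsCost u P')) := by
  constructor
  · intro t
    refine Finset.sum_congr rfl fun k _ => Finset.sum_congr rfl fun i _ => ?_
    by_cases h : u i ∈ P k <;>
      simp [Set.indicator, h, key_eq (u i) (u (t k)) (hu i) (hu (t k))]
  · constructor <;> intro h P' hP' <;>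
      [rw [← cost_eq u hu P, ← cost_eq u hu P']; rw [cost_eq u hu P, cost_eq u hu P']] <;>
      exact h P' hP'
end
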